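/- Let Π₁, Π₂ ∈ ℂ^{n×n} and ℂ^{m×m} be orthogonal projection matrices. Then for any A ∈ ℂ^{m×n}, ‖A − Π₂ A Π₁‖_F² ≤ ‖A − A Π₁‖_F² + ‖A − Π₂ A‖_F². (This is the matrix case d = 2 of the tensor projection lemma.) -/

import Mathlib

open Matrix BigOperators

/-- Frobenius norm of a complex matrix. -/
noncomputable def frob {m n : Type*} [Fintype m] [Fintype n] (A : Matrix m n ℂ) : ℝ :=
  Real.sqrt (∑ i, ∑ j, ‖A i j‖ ^ 2)

lemma frob_pythagoras {m n : Type*} [Fintype m] [Fintype n] (X Y : Matrix m n ℂ)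
    (h : Xᴴ * Y = 0) :
    ∑ i, ∑ j, ‖(X + Y) i j‖ ^ 2
      = (∑ i, ∑ j, ‖X i j‖ ^ 2) + ∑ i, ∑ j, ‖Y i j‖ ^ 2 := by
  have htr : (∑ i, ∑ j, (starRingEnd ℂ) (X i j) * Y i j) = 0 := by
    have h' := congrArg Matrix.trace h
    rw [Matrix.trace] at h'
    simp only [Matrix.diag_apply, Matrix.mul_apply, Matrix.conjTranspose_apply,
      Matrix.trace_zero] at h'
    rw [Finset.sum_comm]
    simpa using h'
  have expand : ∀ a b : ℂ, ‖a + b‖ ^ 2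
      = ‖a‖ ^ 2 + ‖b‖ ^ 2 + 2 * ((starRingEnd ℂ) a * b).re := by
    intro a b
    simp only [Complex.sq_norm, Complex.normSq_apply,
      Complex.add_re, Complex.add_im, Complex.mul_re, Complex.conj_re, Complex.conj_im]
    ring
  have : ∑ i, ∑ j, ‖(X + Y) i j‖ ^ 2
      = ∑ i, ∑ j, (‖X i j‖ ^ 2 + ‖Y i j‖ ^ 2 + 2 * ((starRingEnd ℂ) (X i j) * Y i j).re) := by
    refine Finset.sum_congr rfl fun i _ => Finset.sum_congr rfl fun j _ => ?_
    simp only [Matrix.add_apply]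
    exact expand _ _
  rw [this]
  have hre : ∑ i, ∑ j, ((starRingEnd ℂ) (X i j) * Y i j).re
      = (∑ i, ∑ j, (starRingEnd ℂ) (X i j) * Y i j).re := by
    simp [Complex.re_sum]
  simp only [Finset.sum_add_distrib, ← Finset.mul_sum]
  rw [hre, htr]
  simp

/-- For orthogonal projectors `P₁ : ℂ^{n×n}` and `P₂ : ℂ^{m×m}`,
`‖A − P₂ A P₁‖_F² ≤ ‖A − A P₁‖_F² + ‖A − P₂ A‖_F²` (matrix case `d = 2` of the
tensor projection lemma). -/
theorem frob_sq_two_proj_le {m n : ℕ}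
    (P₁ : Matrix (Fin n) (Fin n) ℂ) (h₁idem : P₁ * P₁ = P₁) (h₁herm : P₁ᴴ = P₁)
    (P₂ : Matrix (Fin m) (Fin m) ℂ) (h₂idem : P₂ * P₂ = P₂) (h₂herm : P₂ᴴ = P₂)
    (A : Matrix (Fin m) (Fin n) ℂ) :
    frob (A - P₂ * A * P₁) ^ 2 ≤ frob (A - A * P₁) ^ 2 + frob (A - P₂ * A) ^ 2 := by
  have hsq : ∀ X : Matrix (Fin m) (Fin n) ℂ, frob X ^ 2 = ∑ i, ∑ j, ‖X i j‖ ^ 2 := by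
    intro X
    exact Real.sq_sqrt (by positivity)
  set B : Matrix (Fin m) (Fin n) ℂ := A - A * P₁ with hB
  -- decomposition
  have hdec : A - P₂ * A * P₁ = (A - P₂ * A) + P₂ * B := by
    rw [hB, Matrix.mul_sub, ← Matrix.mul_assoc]; abel
  have horth1 : (A - P₂ * A)ᴴ * (P₂ * B) = 0 := by
    have h1 : (A - P₂ * A)ᴴ = Aᴴ - Aᴴ * P₂ := by
      simp [Matrix.conjTranspose_sub, Matrix.conjTranspose_mul, h₂herm]
    rw [h1]
    have h2 : (Aᴴ - Aᴴ * P₂) * (P₂ * B) = Aᴴ * (P₂ * B) - Aᴴ * ((P₂ * P₂) * B) := by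
      simp [Matrix.sub_mul, Matrix.mul_assoc]
    rw [h2, h₂idem, sub_self]
  have horth2 : (P₂ * B)ᴴ * (B - P₂ * B) = 0 := by
    have h1 : (P₂ * B)ᴴ = Bᴴ * P₂ := by
      simp [Matrix.conjTranspose_mul, h₂herm]
    rw [h1]
    have h2 : Bᴴ * P₂ * (B - P₂ * B) = Bᴴ * (P₂ * B) - Bᴴ * ((P₂ * P₂) * B) := by
      simp [Matrix.mul_sub, Matrix.mul_assoc]
    rw [h2, h₂idem, sub_self]
  have e1 : ∑ i, ∑ j, ‖(A - P₂ * A * P₁) i j‖ ^ 2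
      = (∑ i, ∑ j, ‖(A - P₂ * A) i j‖ ^ 2) + ∑ i, ∑ j, ‖(P₂ * B) i j‖ ^ 2 := by
    rw [hdec]; exact frob_pythagoras _ _ horth1
  have e2 : ∑ i, ∑ j, ‖B i j‖ ^ 2
      = (∑ i, ∑ j, ‖(P₂ * B) i j‖ ^ 2) + ∑ i, ∑ j, ‖(B - P₂ * B) i j‖ ^ 2 := by
    have : B = P₂ * B + (B - P₂ * B) := by abel
    conv_lhs => rw [this]
    exact frob_pythagoras _ _ horth2
  have hnn : (0:ℝ) ≤ ∑ i, ∑ j, ‖(B - P₂ * B) i j‖ ^ 2 := by positivity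
  rw [hsq, hsq, hsq, e1]
  linarith
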